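/- arXiv:2404.09084 — 2 statements merged into one kernel-verified Lean document; each statement's English description precedes it below -/
import Mathlib

section
/- Let n ≥ 1 and let W = (W₁,…,Wₙ) and W' = (W'₁,…,W'ₙ) be weighted left multi-shifts on F²(Hₙ) associated with weight sequences μ and μ' of nonnegative reals (with the boundedness condition), both satisfying the truncation property: whenever the weight of a word β = g_{i₁}⋯g_{i_k} is nonzero, the weights of all its proper suffixes are also nonzero. Assume μ_β = 0 if and only if μ'_β = 0, for every β with |β| ≥ 1. Then W is jointly unitarily equivalent to W' (i.e., there is a unitary A on F²(Hₙ) with A W_i = W'_i A for all i) if and only if μ_β = μ'_β for every β ∈ 𝔽ₙ⁺ with |β| ≥ 1. -/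
open Filter ContinuousLinearMap
open scoped ComplexConjugate

noncomputable section

attribute [local instance] Classical.decEq

abbrev Word (n : ℕ) := FreeMonoid (Fin n)

abbrev Fock (n : ℕ) := lp (fun _ : Word n => ℂ) 2

def fockE {n : ℕ} (α : Word n) : Fock n := lp.single 2 α 1

def wordOp {n : ℕ} {H : Type*} [NormedAddCommGroup H] [InnerProductSpace ℂ H]
    (T : Fin n → H →L[ℂ] H) (α : Word n) : H →L[ℂ] H :=
  ((FreeMonoid.toList α).map T).prod

def wordOfFn {n k : ℕ} (f : Fin k → Fin n) : Word n := FreeMonoid.ofList (List.ofFn f)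

def rowSum {n : ℕ} {H : Type*} [NormedAddCommGroup H] [InnerProductSpace ℂ H]
    [CompleteSpace H] (T : Fin n → H →L[ℂ] H) (k : ℕ) : H →L[ℂ] H :=
  ∑ f : Fin k → Fin n, wordOp T (wordOfFn f) * adjoint (wordOp T (wordOfFn f))

def jsr {n : ℕ} {H : Type*} [NormedAddCommGroup H] [InnerProductSpace ℂ H]
    [CompleteSpace H] (T : Fin n → H →L[ℂ] H) : ℝ :=
  limUnder atTop fun k : ℕ => ‖rowSum T k‖ ^ ((1 : ℝ) / (2 * k))

def muProd {n : ℕ} (μ : Word n → ℝ) (β α : Word n) : ℝ :=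
  ((List.range (FreeMonoid.length β)).map
    fun j => μ (FreeMonoid.ofList ((FreeMonoid.toList β).drop j) * α)).prod

def IsWeightedShift {n : ℕ} (μ : Word n → ℝ) (W : Fin n → Fock n →L[ℂ] Fock n) : Prop :=
  ∀ (i : Fin n) (α : Word n),
    W i (fockE α) = (μ (FreeMonoid.of i * α) : ℂ) • fockE (FreeMonoid.of i * α)

def BddWeights {n : ℕ} (μ : Word n → ℝ) : Prop :=
  ∀ i : Fin n, BddAbove (Set.range fun α : Word n => μ (FreeMonoid.of i * α))

def IsWeightedShiftTensor {n : ℕ} {H : Type*} [NormedAddCommGroup H] [InnerProductSpace ℂ H]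
    (μ : Word n → ℝ)
    (Wt : Fin n → lp (fun _ : Word n => H) 2 →L[ℂ] lp (fun _ : Word n => H) 2) : Prop :=
  ∀ (i : Fin n) (α : Word n) (h : H),
    Wt i (lp.single 2 α h) = (μ (FreeMonoid.of i * α) : ℂ) • lp.single 2 (FreeMonoid.of i * α) h

def polyOp {n : ℕ} {H : Type*} [NormedAddCommGroup H] [InnerProductSpace ℂ H]
    (T : Fin n → H →L[ℂ] H) (c : Word n →₀ ℂ) : H →L[ℂ] H :=
  c.sum fun α z => z • wordOp T α

def TruncProp {n : ℕ} (μ : Word n → ℝ) : Prop :=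
  ∀ β : Word n, μ β ≠ 0 → ∀ j : ℕ, j < FreeMonoid.length β →
    μ (FreeMonoid.ofList ((FreeMonoid.toList β).drop j)) ≠ 0

local notation "⟪" x ", " y "⟫" => @inner ℂ _ _ x y

variable {n : ℕ}

lemma inner_fockE_left (γ : Word n) (f : Fock n) : ⟪fockE γ, f⟫ = f γ := by
  rw [fockE, lp.inner_single_left]
  simp

lemma norm_fockE (γ : Word n) : ‖(fockE γ : Fock n)‖ = 1 := by
  exact (lp.norm_single (p := 2) (E := fun _ : Word n => ℂ) (by norm_num) γ (1 : ℂ)).trans norm_one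

lemma single_eq_smul (γ : Word n) (c : ℂ) : lp.single 2 γ c = c • fockE γ := by
  rw [fockE, ← lp.single_smul]
  simp

lemma wordOp_one {H : Type*} [NormedAddCommGroup H] [InnerProductSpace ℂ H]
    (T : Fin n → H →L[ℂ] H) : wordOp T 1 = 1 := rfl

lemma wordOp_cons {H : Type*} [NormedAddCommGroup H] [InnerProductSpace ℂ H]
    (T : Fin n → H →L[ℂ] H) (i : Fin n) (δ : Word n) :
    wordOp T (FreeMonoid.of i * δ) = T i * wordOp T δ := rfl

lemma muProd_one (μ : Word n → ℝ) (α : Word n) : muProd μ 1 α = 1 := rfl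

lemma muProd_cons (μ : Word n → ℝ) (i : Fin n) (δ α : Word n) :
    muProd μ (FreeMonoid.of i * δ) α = μ (FreeMonoid.of i * δ * α) * muProd μ δ α := by
  rw [muProd, muProd]
  have h1 : FreeMonoid.length (FreeMonoid.of i * δ) = FreeMonoid.length δ + 1 := by
    simp [FreeMonoid.length_mul]
    omega
  rw [h1, List.range_succ_eq_map, List.map_cons, List.prod_cons, List.map_map]
  congr 1

lemma wordOp_fockE {μ : Word n → ℝ} {W : Fin n → Fock n →L[ℂ] Fock n}
    (hW : IsWeightedShift μ W) (δ α : Word n) :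
    wordOp W δ (fockE α) = (muProd μ δ α : ℂ) • fockE (δ * α) := by
  induction δ using FreeMonoid.recOn with
  | one => simp [wordOp_one, muProd_one]
  | of_mul i δ ih =>
    rw [wordOp_cons, mul_apply_eq_comp, ih, map_smul, hW i (δ * α), muProd_cons]
    rw [smul_smul, mul_assoc]
    push_cast
    ring_nf

lemma hasSum_expand (x : Fock n) :
    HasSum (fun γ : Word n => (x γ) • fockE γ) x := by
  have h := lp.hasSum_single (E := fun _ : Word n => ℂ) (p := 2) (by norm_num) x
  convert h using 2 with γ
  rw [single_eq_smul]

lemma range_orth {μ : Word n → ℝ} {W : Fin n → Fock n →L[ℂ] Fock n}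
    (hW : IsWeightedShift μ W) (i : Fin n) (x : Fock n) :
    ⟪fockE (1 : Word n), W i x⟫ = 0 := by
  have h1 : HasSum (fun γ : Word n => (x γ) • (W i (fockE γ))) (W i x) := by
    have h := (hasSum_expand x).mapL (W i)
    simpa using h
  have h2 : HasSum (fun γ : Word n => ⟪fockE (1 : Word n), (x γ) • (W i (fockE γ))⟫)
      ⟪fockE (1 : Word n), W i x⟫ := (innerSL ℂ (fockE (1 : Word n))).hasSum h1
  have h3 : ∀ γ : Word n, ⟪fockE (1 : Word n), (x γ) • (W i (fockE γ))⟫ = 0 := by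
    intro γ
    rw [hW i γ, inner_smul_right, inner_smul_right, inner_fockE_left]
    have : ((fockE (FreeMonoid.of i * γ) : Fock n) : ∀ _ : Word n, ℂ) 1 = 0 := by
      apply lp.single_apply_ne
      intro h
      have := congrArg FreeMonoid.length h
      simp [FreeMonoid.length_mul] at this
      omega
    rw [this, mul_zero, mul_zero]
  simp only [h3] at h2
  exact h2.unique hasSum_zero

lemma star_intertwine {A : Fock n →L[ℂ] Fock n} {W W' : Fin n → Fock n →L[ℂ] Fock n}
    (hA : A ∈ unitary (Fock n →L[ℂ] Fock n))
    (hAW : ∀ i, A.comp (W i) = (W' i).comp A) :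
    ∀ i, (star A).comp (W' i) = (W i).comp (star A) := by
  obtain ⟨h1, h2⟩ := Unitary.mem_iff.mp hA
  intro i
  have h3 : A * W i = W' i * A := hAW i
  show star A * W' i = W i * star A
  calc star A * W' i = star A * W' i * (A * star A) := by rw [h2, mul_one]
    _ = star A * (W' i * A) * star A := by simp only [mul_assoc]
    _ = star A * (A * W i) * star A := by rw [← h3]
    _ = (star A * A) * (W i * star A) := by simp only [mul_assoc]
    _ = W i * star A := by rw [h1, one_mul]

lemma intertwine_word {A : Fock n →L[ℂ] Fock n} {W W' : Fin n → Fock n →L[ℂ] Fock n}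
    (hAW : ∀ i, A.comp (W i) = (W' i).comp A) (δ : Word n) (x : Fock n) :
    A (wordOp W δ x) = wordOp W' δ (A x) := by
  induction δ using FreeMonoid.recOn with
  | one => simp [wordOp_one]
  | of_mul i δ ih =>
    rw [wordOp_cons, wordOp_cons, mul_apply_eq_comp, mul_apply_eq_comp, ← ih]
    exact DFunLike.congr_fun (hAW i) (wordOp W δ x)

lemma norm_map_unitary {A : Fock n →L[ℂ] Fock n}
    (hA : A ∈ unitary (Fock n →L[ℂ] Fock n)) (x : Fock n) : ‖A x‖ = ‖x‖ := by
  obtain ⟨h1, _⟩ := Unitary.mem_iff.mp hA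
  have h2 : ⟪A x, A x⟫ = ⟪x, x⟫ := by
    rw [← ContinuousLinearMap.adjoint_inner_left]
    have h3 : (ContinuousLinearMap.adjoint A) (A x) = x := by
      rw [← ContinuousLinearMap.star_eq_adjoint, ← mul_apply_eq_comp, h1, one_apply_eq_self]
    rw [h3]
  rw [inner_self_eq_norm_sq_to_K, inner_self_eq_norm_sq_to_K] at h2
  have h4 : (‖A x‖ : ℝ) ^ 2 = ‖x‖ ^ 2 := by exact_mod_cast h2
  nlinarith [norm_nonneg (A x), norm_nonneg x]

lemma word_cons (γ : Word n) (hγ : γ ≠ 1) : ∃ (i : Fin n) (γ₂ : Word n),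
    γ = FreeMonoid.of i * γ₂ := by
  rcases h : FreeMonoid.toList γ with _ | ⟨i, l⟩
  · exfalso
    apply hγ
    have := congrArg FreeMonoid.ofList h
    simpa [FreeMonoid.ofList_toList] using this
  · refine ⟨i, FreeMonoid.ofList l, ?_⟩
    have := congrArg FreeMonoid.ofList h
    rw [FreeMonoid.ofList_toList] at this
    rw [this, FreeMonoid.ofList_cons]

lemma orth {μ μ' : Word n → ℝ} {W W' : Fin n → Fock n →L[ℂ] Fock n}
    (hW : IsWeightedShift μ W) (hW' : IsWeightedShift μ' W')
    {A : Fock n →L[ℂ] Fock n} (hA : A ∈ unitary (Fock n →L[ℂ] Fock n))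
    (hAW : ∀ i, A.comp (W i) = (W' i).comp A)
    (γ : Word n) (hγ : γ ≠ 1) (hγ' : μ' γ ≠ 0) :
    ⟪fockE γ, A (fockE (1 : Word n))⟫ = 0 := by
  obtain ⟨i, γ₂, rfl⟩ := word_cons γ hγ
  have hBW := star_intertwine hA hAW
  rw [← ContinuousLinearMap.adjoint_inner_left]
  have he : (fockE (FreeMonoid.of i * γ₂) : Fock n)
      = ((μ' (FreeMonoid.of i * γ₂) : ℂ))⁻¹ • W' i (fockE γ₂) := by
    rw [hW' i γ₂, smul_smul, inv_mul_cancel₀ (by exact_mod_cast hγ'), one_smul]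
  rw [he, map_smul, inner_smul_left]
  have h5 : (ContinuousLinearMap.adjoint A) (W' i (fockE γ₂))
      = W i ((ContinuousLinearMap.adjoint A) (fockE γ₂)) := by
    rw [← ContinuousLinearMap.star_eq_adjoint]
    exact DFunLike.congr_fun (hBW i) (fockE γ₂)
  rw [h5]
  have h6 : ⟪W i ((ContinuousLinearMap.adjoint A) (fockE γ₂)), fockE (1 : Word n)⟫ = 0 := by
    have h7 := range_orth hW i ((ContinuousLinearMap.adjoint A) (fockE γ₂))
    rw [← inner_conj_symm, h7, map_zero]
  rw [h6, mul_zero]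

lemma muProd_nonneg {μ : Word n → ℝ} (hμ : ∀ β : Word n, 1 ≤ FreeMonoid.length β → 0 ≤ μ β)
    (δ α : Word n) : 0 ≤ muProd μ δ α := by
  apply List.prod_nonneg
  intro a ha
  simp only [List.mem_map, List.mem_range] at ha
  obtain ⟨j, hj, rfl⟩ := ha
  apply hμ
  have : FreeMonoid.length (FreeMonoid.ofList ((FreeMonoid.toList δ).drop j))
      = FreeMonoid.length δ - j := by
    show ((FreeMonoid.toList δ).drop j).length = _
    rw [List.length_drop]
    rfl
  rw [FreeMonoid.length_mul, this]
  omega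

lemma muProd_pos {μ : Word n → ℝ} (hμ : ∀ β : Word n, 1 ≤ FreeMonoid.length β → 0 ≤ μ β)
    (htr : TruncProp μ) (δ : Word n) (hδ : μ δ ≠ 0) : 0 < muProd μ δ 1 := by
  apply List.prod_pos
  intro a ha
  simp only [List.mem_map, List.mem_range] at ha
  obtain ⟨j, hj, rfl⟩ := ha
  rw [mul_one]
  have hlen : 1 ≤ FreeMonoid.length (FreeMonoid.ofList ((FreeMonoid.toList δ).drop j)) := by
    show 1 ≤ ((FreeMonoid.toList δ).drop j).length
    rw [List.length_drop]
    have : FreeMonoid.length δ = (FreeMonoid.toList δ).length := rfl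
    omega
  exact lt_of_le_of_ne (hμ _ hlen) (Ne.symm (htr δ hδ j hj))

lemma muProd_zero_of {μ' : Word n → ℝ} (htr' : TruncProp μ') (δ γ : Word n)
    (hδ : δ ≠ 1) (hγ : γ ≠ 1) (hz : μ' γ = 0) : muProd μ' δ γ = 0 := by
  apply List.prod_eq_zero
  simp only [List.mem_map, List.mem_range]
  refine ⟨0, ?_, ?_⟩
  · have : FreeMonoid.length δ ≠ 0 := fun h => hδ (FreeMonoid.length_eq_zero.mp h)
    omega
  · rw [List.drop_zero, FreeMonoid.ofList_toList]
    by_contra h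
    have hlt : FreeMonoid.length δ < FreeMonoid.length (δ * γ) := by
      rw [FreeMonoid.length_mul]
      have : FreeMonoid.length γ ≠ 0 := fun h0 => hγ (FreeMonoid.length_eq_zero.mp h0)
      omega
    have h8 := htr' (δ * γ) h (FreeMonoid.length δ) hlt
    apply h8
    have hdrop : (FreeMonoid.toList (δ * γ)).drop (FreeMonoid.length δ)
        = FreeMonoid.toList γ := by
      rw [FreeMonoid.toList_mul]
      exact List.drop_left
    rw [hdrop, FreeMonoid.ofList_toList, hz]

lemma supp {μ μ' : Word n → ℝ} {W W' : Fin n → Fock n →L[ℂ] Fock n}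
    (hW : IsWeightedShift μ W) (hW' : IsWeightedShift μ' W') (htr' : TruncProp μ')
    {A : Fock n →L[ℂ] Fock n} (hA : A ∈ unitary (Fock n →L[ℂ] Fock n))
    (hAW : ∀ i, A.comp (W i) = (W' i).comp A) (δ : Word n) (hδ : δ ≠ 1) :
    wordOp W' δ (A (fockE (1 : Word n)))
      = ⟪fockE (1 : Word n), A (fockE (1 : Word n))⟫ •
        ((muProd μ' δ 1 : ℂ) • fockE (δ * 1)) := by
  set x := A (fockE (1 : Word n)) with hx
  have h1 : HasSum (fun γ : Word n => (x γ) • wordOp W' δ (fockE γ)) (wordOp W' δ x) := by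
    have h := (hasSum_expand x).mapL (wordOp W' δ)
    simpa using h
  have h2 : ∀ γ : Word n, γ ≠ 1 → (x γ) • wordOp W' δ (fockE γ) = 0 := by
    intro γ hγ
    by_cases hz : μ' γ = 0
    · rw [wordOp_fockE hW', muProd_zero_of htr' δ γ hδ hγ hz]
      simp
    · have h0 : x γ = 0 := by
        rw [← inner_fockE_left γ x, hx]
        exact orth hW hW' hA hAW γ hγ hz
      rw [h0, zero_smul]
  have h3 : HasSum (fun γ : Word n => (x γ) • wordOp W' δ (fockE γ))
      ((x 1) • wordOp W' δ (fockE (1 : Word n))) := by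
    exact hasSum_single 1 h2
  have h4 := h1.unique h3
  rw [h4, wordOp_fockE hW', inner_fockE_left]

lemma key {μ μ' : Word n → ℝ} {W W' : Fin n → Fock n →L[ℂ] Fock n}
    (hμ : ∀ β : Word n, 1 ≤ FreeMonoid.length β → 0 ≤ μ β)
    (hμ' : ∀ β : Word n, 1 ≤ FreeMonoid.length β → 0 ≤ μ' β)
    (hW : IsWeightedShift μ W) (hW' : IsWeightedShift μ' W') (htr' : TruncProp μ')
    {A : Fock n →L[ℂ] Fock n} (hA : A ∈ unitary (Fock n →L[ℂ] Fock n))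
    (hAW : ∀ i, A.comp (W i) = (W' i).comp A) (δ : Word n) (hδ : δ ≠ 1) :
    muProd μ δ 1 = ‖⟪fockE (1 : Word n), A (fockE (1 : Word n))⟫‖ * muProd μ' δ 1 := by
  have h1 : ‖A (wordOp W δ (fockE (1 : Word n)))‖ = muProd μ δ 1 := by
    rw [norm_map_unitary hA, wordOp_fockE hW, norm_smul, norm_fockE, mul_one,
      Complex.norm_real, Real.norm_eq_abs, abs_of_nonneg (muProd_nonneg hμ δ 1)]
  have h2 : A (wordOp W δ (fockE (1 : Word n))) = wordOp W' δ (A (fockE (1 : Word n))) :=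
    intertwine_word hAW δ _
  rw [h2, supp hW hW' htr' hA hAW δ hδ] at h1
  rw [← h1, norm_smul, norm_smul, norm_fockE, mul_one, Complex.norm_real,
    Real.norm_eq_abs, abs_of_nonneg (muProd_nonneg hμ' δ 1)]

lemma shift_ext {μ μ' : Word n → ℝ} {W W' : Fin n → Fock n →L[ℂ] Fock n}
    (hW : IsWeightedShift μ W) (hW' : IsWeightedShift μ' W')
    (h : ∀ β : Word n, 1 ≤ FreeMonoid.length β → μ β = μ' β) (i : Fin n) : W i = W' i := by
  apply ContinuousLinearMap.ext
  intro x
  have h1 : HasSum (fun γ : Word n => (x γ) • W i (fockE γ)) (W i x) := by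
    simpa using (hasSum_expand x).mapL (W i)
  have h2 : HasSum (fun γ : Word n => (x γ) • W' i (fockE γ)) (W' i x) := by
    simpa using (hasSum_expand x).mapL (W' i)
  have h3 : (fun γ : Word n => (x γ) • W i (fockE γ))
      = fun γ : Word n => (x γ) • W' i (fockE γ) := by
    funext γ
    rw [hW i γ, hW' i γ, h (FreeMonoid.of i * γ) (by
      rw [FreeMonoid.length_mul, FreeMonoid.length_of]; omega)]
  rw [h3] at h1
  exact h1.unique h2

theorem stmt_8 (n : ℕ) (hn : 1 ≤ n) (μ μ' : Word n → ℝ)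
    (hμ : ∀ β : Word n, 1 ≤ FreeMonoid.length β → 0 ≤ μ β)
    (hμ' : ∀ β : Word n, 1 ≤ FreeMonoid.length β → 0 ≤ μ' β)
    (hbdd : BddWeights μ) (hbdd' : BddWeights μ')
    (htr : TruncProp μ) (htr' : TruncProp μ')
    (hzero : ∀ β : Word n, 1 ≤ FreeMonoid.length β → (μ β = 0 ↔ μ' β = 0))
    (W W' : Fin n → Fock n →L[ℂ] Fock n)
    (hW : IsWeightedShift μ W) (hW' : IsWeightedShift μ' W') :
    (∃ A : Fock n →L[ℂ] Fock n, A ∈ unitary (Fock n →L[ℂ] Fock n) ∧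
        ∀ i, A.comp (W i) = (W' i).comp A) ↔
      ∀ β : Word n, 1 ≤ FreeMonoid.length β → μ β = μ' β := by
  constructor
  · rintro ⟨A, hA, hAW⟩ β hβ
    by_cases hz : μ β = 0
    · rw [hz, (hzero β hβ).mp hz]
    · have hβ1 : β ≠ 1 := by
        intro h
        rw [h, FreeMonoid.length_one] at hβ
        omega
      have hA' : star A ∈ unitary (Fock n →L[ℂ] Fock n) := Unitary.star_mem hA
      have hBW := star_intertwine hA hAW
      have hkey1 := fun δ hδ => key hμ hμ' hW hW' htr' hA hAW δ hδ
      have hkey2 := fun δ hδ => key hμ' hμ hW' hW htr hA' hBW δ hδ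
      set c := ‖⟪fockE (1 : Word n), A (fockE (1 : Word n))⟫‖ with hc
      set c' := ‖⟪fockE (1 : Word n), (star A) (fockE (1 : Word n))⟫‖ with hc'
      have hm : 0 < muProd μ β 1 := muProd_pos hμ htr β hz
      have e1 := hkey1 β hβ1
      have e2 := hkey2 β hβ1
      have hcc : c * c' = 1 := by
        have h0 : muProd μ β 1 = c * (c' * muProd μ β 1) := by rw [← e2, ← e1]
        nlinarith [hm]
      have hcle : c ≤ 1 := by
        calc c ≤ ‖(fockE (1 : Word n) : Fock n)‖ * ‖A (fockE (1 : Word n))‖ :=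
              norm_inner_le_norm _ _
          _ = 1 := by rw [norm_map_unitary hA, norm_fockE]; ring
      have hcle' : c' ≤ 1 := by
        calc c' ≤ ‖(fockE (1 : Word n) : Fock n)‖ * ‖(star A) (fockE (1 : Word n))‖ :=
              norm_inner_le_norm _ _
          _ = 1 := by rw [norm_map_unitary hA', norm_fockE]; ring
      have hc0 : (0:ℝ) ≤ c := norm_nonneg _
      have hc0' : (0:ℝ) ≤ c' := norm_nonneg _
      have hceq : c = 1 := by nlinarith
      have hall : ∀ δ : Word n, δ ≠ 1 → muProd μ δ 1 = muProd μ' δ 1 := by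
        intro δ hδ
        rw [hkey1 δ hδ, hceq, one_mul]
      obtain ⟨i, β₂, rfl⟩ := word_cons β hβ1
      have hs : μ (FreeMonoid.of i * β₂) * muProd μ β₂ 1
          = μ' (FreeMonoid.of i * β₂) * muProd μ' β₂ 1 := by
        have := hall (FreeMonoid.of i * β₂) hβ1
        rw [muProd_cons, muProd_cons, mul_one] at this
        exact this
      by_cases hb2 : β₂ = 1
      · subst hb2
        simpa [muProd_one] using hs
      · have hl : 1 < FreeMonoid.length (FreeMonoid.of i * β₂) := by
          rw [FreeMonoid.length_mul, FreeMonoid.length_of]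
          have : FreeMonoid.length β₂ ≠ 0 := fun h0 => hb2 (FreeMonoid.length_eq_zero.mp h0)
          omega
        have hμβ₂ : μ β₂ ≠ 0 := htr (FreeMonoid.of i * β₂) hz 1 hl
        have hm2 : 0 < muProd μ β₂ 1 := muProd_pos hμ htr β₂ hμβ₂
        rw [hall β₂ hb2] at hs
        have hm2' : muProd μ' β₂ 1 ≠ 0 := by rw [← hall β₂ hb2]; exact ne_of_gt hm2
        exact mul_right_cancel₀ hm2' hs
  · intro h
    refine ⟨1, ?_, ?_⟩
    · exact (unitary (Fock n →L[ℂ] Fock n)).one_mem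
    · intro i
      rw [shift_ext hW hW' h i]
      simp [ContinuousLinearMap.one_def]


end
end

section
/- Let n ≥ 1 and let W = (W₁,…,Wₙ) be the weighted left multi-shift on F²(Hₙ) associated with a weight sequence μ = {μ_β}_{|β|≥1} of nonnegative reals with sup_{α∈𝔽ₙ⁺} μ_{g_iα} < ∞ for each i. Then the C*-algebra C*(W) generated by W₁,…,Wₙ and the identity is irreducible — equivalently, every bounded operator A on F²(Hₙ) satisfying A W_i = W_i A and A W_i^* = W_i^* A for all i ∈ {1,…,n} is a scalar multiple of the identity — if and only if μ_β > 0 for every β ∈ 𝔽ₙ⁺ with |β| ≥ 1. -/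
open Filter ContinuousLinearMap
open scoped ComplexConjugate

noncomputable section

attribute [local instance] Classical.decEq

section Aux
variable {n : ℕ}

local notation "⟪" x ", " y "⟫" => @inner ℂ _ _ x y

lemma fock_inner (γ : Word n) (x : Fock n) : ⟪fockE γ, x⟫ = x γ := by
  rw [fockE, lp.inner_single_left, RCLike.inner_apply]
  simp

lemma fockE_apply (α γ : Word n) : (fockE α) γ = if γ = α then 1 else 0 := by
  rw [fockE, lp.single_apply]
  split <;> simp_all

lemma fockE_ne_zero (α : Word n) : fockE α ≠ 0 := by
  intro h
  have := congrArg (fun x : Fock n => x α) h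
  simp [fockE_apply] at this

lemma clm_ext {T S : Fock n →L[ℂ] Fock n} (h : ∀ γ, T (fockE γ) = S (fockE γ)) : T = S := by
  refine ContinuousLinearMap.ext fun x => ?_
  have hs : HasSum (fun γ : Word n => lp.single 2 γ (x γ)) x :=
    lp.hasSum_single ENNReal.ofNat_ne_top x
  have h1 : ∀ γ : Word n, lp.single 2 γ (x γ) = (x γ) • fockE γ := by
    intro γ
    rw [fockE, ← lp.single_smul]
    norm_num
  have hT : HasSum (fun γ : Word n => T ((x γ) • fockE γ)) (T x) := by
    simpa [h1] using hs.mapL T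
  have hS : HasSum (fun γ : Word n => T ((x γ) • fockE γ)) (S x) := by
    have := hs.mapL S
    simp only [h1] at this
    simpa [map_smul, h] using this
  exact hT.unique hS

end Aux

section Adj
variable {n : ℕ}

local notation "⟪" x ", " y "⟫" => @inner ℂ _ _ x y

variable {μ : Word n → ℝ} {W : Fin n → Fock n →L[ℂ] Fock n}

lemma adj_apply (hW : IsWeightedShift μ W) (i : Fin n) (x : Fock n) (γ : Word n) :
    (adjoint (W i) x) γ = (μ (FreeMonoid.of i * γ) : ℂ) * x (FreeMonoid.of i * γ) := by
  rw [← fock_inner, ContinuousLinearMap.adjoint_inner_right, hW i γ, inner_smul_left,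
    Complex.conj_ofReal, fock_inner]

lemma adj_single_one (hW : IsWeightedShift μ W) (i : Fin n) :
    adjoint (W i) (fockE (1 : Word n)) = 0 := by
  refine lp.ext (funext fun γ => ?_)
  rw [adj_apply hW]
  have : (FreeMonoid.of i * γ) ≠ (1 : Word n) := by
    intro h
    have := congrArg FreeMonoid.length h
    simp [FreeMonoid.length_mul] at this
  simp [fockE_apply, this]

lemma of_mul_inj {i j : Fin n} {s t : Word n}
    (h : FreeMonoid.of i * s = FreeMonoid.of j * t) : i = j ∧ s = t := by
  have h' := congrArg FreeMonoid.toList h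
  rw [FreeMonoid.toList_of_mul, FreeMonoid.toList_of_mul] at h'
  obtain ⟨h1, h2⟩ := List.cons_eq_cons.mp h'
  exact ⟨h1, congrArg FreeMonoid.ofList h2⟩

lemma adj_single_cons (hW : IsWeightedShift μ W) (i j : Fin n) (t : Word n) :
    adjoint (W i) (fockE (FreeMonoid.of j * t)) =
      if j = i then (μ (FreeMonoid.of j * t) : ℂ) • fockE t else 0 := by
  refine lp.ext (funext fun γ => ?_)
  rw [adj_apply hW]
  by_cases hj : j = i
  · subst hj
    by_cases hγ : γ = t
    · subst hγ
      rw [if_pos rfl]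
      show _ = (_ : ℂ) * _
      simp [fockE_apply, lp.coeFn_smul]
    · have : FreeMonoid.of j * γ ≠ FreeMonoid.of j * t := fun h => hγ (of_mul_inj h).2
      rw [if_pos rfl]
      show _ = (_ : ℂ) * _
      simp [fockE_apply, this, hγ, lp.coeFn_smul]
  · have : FreeMonoid.of i * γ ≠ FreeMonoid.of j * t := fun h => hj (of_mul_inj h).1.symm
    simp [fockE_apply, this, hj]

end Adj

section Ind
variable {n : ℕ}

lemma memℓp_ind (s : Word n → Prop) [DecidablePred s] (x : Fock n) :
    Memℓp (fun γ => if s γ then x γ else 0) 2 := by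
  apply memℓp_gen
  refine Summable.of_nonneg_of_le (fun γ => ?_) (fun γ => ?_)
    ((lp.memℓp x).summable (by norm_num))
  · positivity
  · by_cases h : s γ <;> simp [h] <;> positivity

def indOp (s : Word n → Prop) [DecidablePred s] : Fock n →L[ℂ] Fock n :=
  LinearMap.mkContinuous
    { toFun := fun x => ⟨fun γ => if s γ then x γ else 0, memℓp_ind s x⟩
      map_add' := fun x y => by
        refine lp.ext (funext fun γ => ?_)
        show _ = (if s γ then x γ else 0) + (if s γ then y γ else 0)
        by_cases h : s γ <;> simp [h]
      map_smul' := fun c x => by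
        refine lp.ext (funext fun γ => ?_)
        show _ = c • (if s γ then x γ else 0)
        by_cases h : s γ <;> simp [h] }
    1
    (by
      intro x
      rw [one_mul]
      refine lp.norm_le_of_forall_sum_le (by norm_num) (norm_nonneg x) fun t => ?_
      refine le_trans (Finset.sum_le_sum fun γ _ => ?_)
        (lp.sum_rpow_le_norm_rpow (by norm_num) x t)
      show ‖if s γ then x γ else 0‖ ^ (2:ENNReal).toReal ≤ ‖x γ‖ ^ (2:ENNReal).toReal
      by_cases h : s γ <;> simp [h] <;> positivity)

lemma indOp_apply (s : Word n → Prop) [DecidablePred s] (x : Fock n) (γ : Word n) :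
    (indOp s x) γ = if s γ then x γ else 0 := rfl

lemma indOp_single (s : Word n → Prop) [DecidablePred s] (α : Word n) :
    indOp s (fockE α) = if s α then fockE α else 0 := by
  refine lp.ext (funext fun γ => ?_)
  rw [indOp_apply]
  by_cases hγ : γ = α
  · subst hγ; split <;> simp
  · simp [fockE_apply, hγ]
    split <;> simp [fockE_apply, hγ]

end Ind


set_option maxHeartbeats 1000000 in
theorem stmt_10 (n : ℕ) (hn : 1 ≤ n) (μ : Word n → ℝ)
    (hμ : ∀ β : Word n, 1 ≤ FreeMonoid.length β → 0 ≤ μ β)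
    (hbdd : BddWeights μ)
    (W : Fin n → Fock n →L[ℂ] Fock n) (hW : IsWeightedShift μ W) :
    (∀ A : Fock n →L[ℂ] Fock n,
        (∀ i, A.comp (W i) = (W i).comp A ∧
          A.comp (adjoint (W i)) = (adjoint (W i)).comp A) →
        ∃ c : ℂ, A = c • (1 : Fock n →L[ℂ] Fock n)) ↔
      ∀ β : Word n, 1 ≤ FreeMonoid.length β → 0 < μ β := by

  constructor
  · intro hirr β hβ
    by_contra hpos
    have hβ0 : μ β = 0 := le_antisymm (not_lt.mp hpos) (hμ β hβ)
    set S : Word n → Prop := fun γ => ∃ δ : Word n, γ = δ * β with hSdef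
    haveI : DecidablePred S := fun γ => Classical.propDecidable _
    have hkey : ∀ (i : Fin n) (γ : Word n), μ (FreeMonoid.of i * γ) ≠ 0 →
        (S γ ↔ S (FreeMonoid.of i * γ)) := by
      intro i γ hne
      constructor
      · rintro ⟨δ, rfl⟩
        exact ⟨FreeMonoid.of i * δ, (mul_assoc _ _ _).symm⟩
      · rintro ⟨δ, hδ⟩
        rcases hl : FreeMonoid.toList δ with _ | ⟨j, d⟩
        · exfalso
          have hδ1 : δ = 1 := congrArg FreeMonoid.ofList hl
          rw [hδ1, one_mul] at hδ
          exact hne (hδ ▸ hβ0)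
        · have hδ' : δ = FreeMonoid.of j * FreeMonoid.ofList d := congrArg FreeMonoid.ofList hl
          rw [hδ', mul_assoc] at hδ
          obtain ⟨hij, hγ⟩ := of_mul_inj hδ
          exact ⟨FreeMonoid.ofList d, hγ⟩
    have hcom1 : ∀ i, (indOp S).comp (W i) = (W i).comp (indOp S) := by
      intro i
      refine clm_ext fun γ => ?_
      rw [ContinuousLinearMap.comp_apply, ContinuousLinearMap.comp_apply, hW i γ, map_smul,
        indOp_single, indOp_single]
      by_cases hm : μ (FreeMonoid.of i * γ) = 0
      · split <;> split <;> simp [hW i γ, hm]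
      · by_cases h2 : S γ
        · simp [h2, (hkey i γ hm).mp h2, hW i γ]
        · have h3 : ¬ S (FreeMonoid.of i * γ) := fun h => h2 ((hkey i γ hm).mpr h)
          simp [h2, h3, hW i γ]
    have hcom2 : ∀ i, (indOp S).comp (adjoint (W i)) = (adjoint (W i)).comp (indOp S) := by
      intro i
      refine ContinuousLinearMap.ext fun x => lp.ext (funext fun γ => ?_)
      rw [ContinuousLinearMap.comp_apply, ContinuousLinearMap.comp_apply, indOp_apply,
        adj_apply hW, adj_apply hW, indOp_apply]
      by_cases hm : μ (FreeMonoid.of i * γ) = 0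
      · simp [hm]
      · by_cases h2 : S γ
        · simp [h2, (hkey i γ hm).mp h2]
        · have h3 : ¬ S (FreeMonoid.of i * γ) := fun h => h2 ((hkey i γ hm).mpr h)
          simp [h2, h3]
    obtain ⟨c, hc⟩ := hirr (indOp S) (fun i => ⟨hcom1 i, hcom2 i⟩)
    have hS1 : ¬ S (1 : Word n) := by
      rintro ⟨δ, hδ⟩
      have := congrArg FreeMonoid.length hδ
      rw [FreeMonoid.length_mul] at this
      simp only [FreeMonoid.length_one] at this
      omega
    have h1 : indOp S (fockE (1 : Word n)) = 0 := by
      rw [indOp_single]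
      simp [hS1]
    have hc0 : c = 0 := by
      have h2 := congrArg (fun T : Fock n →L[ℂ] Fock n => T (fockE (1 : Word n))) hc
      simp only [h1, ContinuousLinearMap.smul_apply, ContinuousLinearMap.one_apply] at h2
      rcases smul_eq_zero.mp h2.symm with h | h
      · exact h
      · exact absurd h (fockE_ne_zero _)
    have hβS : S β := ⟨1, (one_mul β).symm⟩
    have h3 : indOp S (fockE β) = fockE β := by
      rw [indOp_single]; simp [hβS]
    rw [hc, hc0] at h3
    simp only [zero_smul, ContinuousLinearMap.zero_apply] at h3
    exact fockE_ne_zero β h3.symm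
  · intro hpos A hA
    set u := A (fockE (1 : Word n)) with hu
    have hzero : ∀ (i : Fin n) (t : Word n), u (FreeMonoid.of i * t) = 0 := by
      intro i t
      have h1 : adjoint (W i) u = 0 := by
        have h2 := congrArg (fun T : Fock n →L[ℂ] Fock n => T (fockE (1 : Word n))) (hA i).2
        simp only [ContinuousLinearMap.comp_apply] at h2
        rw [adj_single_one hW, map_zero] at h2
        exact h2.symm
      have h3 := congrArg (fun v : Fock n => v t) h1
      simp only [adj_apply hW, lp.coeFn_zero, Pi.zero_apply] at h3
      have hμne : (μ (FreeMonoid.of i * t) : ℂ) ≠ 0 :=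
        Complex.ofReal_ne_zero.mpr (ne_of_gt (hpos _ (by
          rw [FreeMonoid.length_mul, FreeMonoid.length_of]; omega)))
      exact (mul_eq_zero.mp h3).resolve_left hμne
    set c := u 1 with hcdef
    have hu1 : u = c • fockE (1 : Word n) := by
      refine lp.ext (funext fun γ => ?_)
      rw [lp.coeFn_smul]
      show u γ = c • (fockE (1 : Word n)) γ
      rcases hγl : FreeMonoid.toList γ with _ | ⟨i, t⟩
      · have hγ : γ = 1 := congrArg FreeMonoid.ofList hγl
        subst hγ
        simp [fockE_apply, smul_eq_mul, ← hcdef]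
      · have hγ : γ = FreeMonoid.of i * FreeMonoid.ofList t := congrArg FreeMonoid.ofList hγl
        have hne : γ ≠ 1 := by
          rw [hγ]
          intro h
          have := congrArg FreeMonoid.length h
          rw [FreeMonoid.length_mul, FreeMonoid.length_of] at this
          simp [FreeMonoid.length_one] at this
        rw [hγ, hzero i (FreeMonoid.ofList t)]
        rw [← hγ]
        simp [fockE_apply, hne]
    have hall : ∀ α : Word n, A (fockE α) = c • fockE α := by
      intro α
      induction α using FreeMonoid.recOn with
      | one => rw [← hu, hu1]
      | of_mul i t ht =>
        have hμne : (μ (FreeMonoid.of i * t) : ℂ) ≠ 0 :=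
          Complex.ofReal_ne_zero.mpr (ne_of_gt (hpos _ (by
            rw [FreeMonoid.length_mul, FreeMonoid.length_of]; omega)))
        have h2 := congrArg (fun T : Fock n →L[ℂ] Fock n => T (fockE t)) (hA i).1
        simp only [ContinuousLinearMap.comp_apply] at h2
        rw [hW i t, map_smul, ht, map_smul, hW i t, smul_comm] at h2
        exact smul_right_injective _ hμne h2
    refine ⟨c, clm_ext fun γ => ?_⟩
    rw [hall γ]
    simp


end
end
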